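/- Let v be a nowhere-vanishing smooth vector field on a smooth manifold X, and let γ : ℝ≥0 → X be a positive-time integral curve of v whose image has compact closure contained in the interior of X. Then there is no smooth function f : X → ℝ with df(v) > 0 everywhere on X. -/

import Mathlib

open scoped Manifold
open Set

/-- Let `v` be a nowhere-vanishing smooth vector field on a smooth manifold
`X` (possibly with boundary), and let `γ : ℝ≥0 → X` be a positive-time integral curve of `v`
whose image has compact closure contained in the interior of `X`.  Then there is no smooth
function `f : X → ℝ` with `df(v) > 0` everywhere on `X` (i.e. no Lyapunov function for `v`). -/
theorem no_lyapunov_of_trapped_trajectory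
    {E H M : Type*} [NormedAddCommGroup E] [NormedSpace ℝ E]
    [TopologicalSpace H] (I : ModelWithCorners ℝ E H)
    [TopologicalSpace M] [ChartedSpace H M] [IsManifold I (⊤ : ℕ∞) M]
    (v : (x : M) → TangentSpace I x) (hv : ∀ x, v x ≠ 0)
    (hvsmooth : ContMDiff I I.tangent (⊤ : ℕ∞) (fun x => (⟨x, v x⟩ : TangentBundle I M)))
    (γ : ℝ → M) (hγ : ∀ t ∈ Ici (0 : ℝ), HasMFDerivAt 𝓘(ℝ, ℝ) I γ t ((1 : ℝ →L[ℝ] ℝ).smulRight (v (γ t))))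
    (hcompact : IsCompact (closure (γ '' Ici (0 : ℝ))))
    (hint : closure (γ '' Ici (0 : ℝ)) ⊆ I.interior M) :
    ¬ ∃ f : M → ℝ, ContMDiff I 𝓘(ℝ, ℝ) (⊤ : ℕ∞) f ∧
        ∀ x : M, (0:ℝ) < (show ℝ from mfderiv I 𝓘(ℝ, ℝ) f x (v x)) := by
  rintro ⟨f, hf, hpos⟩
  set K := closure (γ '' Ici (0 : ℝ)) with hK
  -- the function h x = df_x (v x) is continuous
  set h : M → ℝ := fun x => mfderiv I 𝓘(ℝ, ℝ) f x (v x) with hh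
  have hTf : ContMDiff I.tangent 𝓘(ℝ, ℝ).tangent (⊤ : ℕ∞) (tangentMap I 𝓘(ℝ, ℝ) f) :=
    hf.contMDiff_tangentMap (by exact_mod_cast le_top)
  have hhcont : Continuous h := by
    have : Continuous (fun x : M =>
        (tangentBundleModelSpaceHomeomorph 𝓘(ℝ, ℝ)
          (tangentMap I 𝓘(ℝ, ℝ) f ⟨x, v x⟩)).2) := by
      apply continuous_snd.comp
      exact (tangentBundleModelSpaceHomeomorph 𝓘(ℝ, ℝ)).continuous.comp
        (hTf.continuous.comp hvsmooth.continuous)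
    convert this using 1
    funext x
    rfl
  -- K is nonempty and compact, so h attains a positive minimum ε
  have hγmem : ∀ t ∈ Ici (0:ℝ), γ t ∈ K := fun t ht =>
    subset_closure (mem_image_of_mem γ ht)
  have hKne : K.Nonempty := ⟨γ 0, hγmem 0 self_mem_Ici⟩
  obtain ⟨x₀, hx₀K, hx₀min⟩ := hcompact.exists_isMinOn hKne (hhcont.continuousOn)
  set ε : ℝ := h x₀ with hε
  have hεpos : 0 < ε := hpos x₀
  -- g = f ∘ γ has derivative h (γ t) at every t ≥ 0
  have hg : ∀ t ∈ Ici (0:ℝ), HasDerivAt (fun t => f (γ t)) (h (γ t)) t := by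
    intro t ht
    have h1 : HasMFDerivAt 𝓘(ℝ, ℝ) I γ t
        ((1 : ℝ →L[ℝ] ℝ).smulRight (v (γ t))) := hγ t ht
    have h2 : HasMFDerivAt I 𝓘(ℝ, ℝ) f (γ t) (mfderiv I 𝓘(ℝ, ℝ) f (γ t)) :=
      (hf.mdifferentiableAt (by exact_mod_cast ENat.top_ne_zero)).hasMFDerivAt
    have h3 := h2.comp t h1
    rw [hasMFDerivAt_iff_hasFDerivAt] at h3
    have h3' : HasFDerivAt (f ∘ γ) (((mfderiv I 𝓘(ℝ, ℝ) f (γ t)).comp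
        ((1 : ℝ →L[ℝ] ℝ).smulRight (v (γ t)))) : ℝ →L[ℝ] ℝ) t := h3
    have h4 : HasDerivAt (f ∘ γ) ((((mfderiv I 𝓘(ℝ, ℝ) f (γ t)).comp
        ((1 : ℝ →L[ℝ] ℝ).smulRight (v (γ t)))) : ℝ →L[ℝ] ℝ) 1) t :=
      hasFDerivAt_iff_hasDerivAt.mp h3'
    have heq : (((mfderiv I 𝓘(ℝ, ℝ) f (γ t)).comp
        ((1 : ℝ →L[ℝ] ℝ).smulRight (v (γ t)))) 1 : ℝ)
        = mfderiv I 𝓘(ℝ, ℝ) f (γ t) (v (γ t)) := by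
      simp
    rw [show h (γ t) = _ from heq.symm]
    exact h4
  -- hence f ∘ γ grows at least linearly
  have hgrow : ∀ t ∈ Ici (0:ℝ), ε * (t - 0) ≤ f (γ t) - f (γ 0) := by
    intro t ht
    apply (convex_Ici 0).mul_sub_le_image_sub_of_le_deriv
      (fun s hs => (hg s hs).continuousAt.continuousWithinAt)
      (fun s hs => ((hg s (interior_subset hs)).differentiableAt).differentiableWithinAt)
      ?_ 0 self_mem_Ici t ht (mem_Ici.mp ht)
    intro s hs
    rw [(hg s (interior_subset hs)).deriv]
    exact hx₀min (hγmem s (interior_subset hs))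
  -- but f is bounded on the compact set K
  obtain ⟨C, hC⟩ := (hcompact.image hf.continuous).bddAbove
  have hbound : ∀ t ∈ Ici (0:ℝ), f (γ t) ≤ C := fun t ht =>
    hC (mem_image_of_mem f (hγmem t ht))
  -- contradiction at large t
  set T : ℝ := max 0 ((C - f (γ 0)) / ε + 1) with hT
  have hT0 : (0:ℝ) ≤ T := le_max_left _ _
  have h1 := hgrow T hT0
  have h2 := hbound T hT0
  have h3 : (C - f (γ 0)) / ε + 1 ≤ T := le_max_right _ _
  nlinarith [div_mul_cancel₀ (C - f (γ 0)) (ne_of_gt hεpos)]
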